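/- For every regular expression α and letter σ, the language of the set of partial derivatives satisfies L(∂_σ(α)) = σ⁻¹L(α) = {w : σw ∈ L(α)}, where L(S) denotes the union of the languages of the expressions in S. -/

import Mathlib

open RegularExpression
open scoped Classical

variable {σ : Type*}

/-- `S ⊙ β`: append `β` on the right to every element of `S`, with `S ⊙ ∅ = ∅`. -/
noncomputable def odot (S : Finset (RegularExpression σ)) (β : RegularExpression σ) :
    Finset (RegularExpression σ) :=
  if β = zero then ∅ else S.image (fun γ => comp γ β)

/-- Antimirov's partial derivative of a regular expression w.r.t. a letter. -/
noncomputable def pd (a : σ) : RegularExpression σ → Finset (RegularExpression σ)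
  | zero => ∅
  | epsilon => ∅
  | char b => if b = a then {epsilon} else ∅
  | plus P Q => pd a P ∪ pd a Q
  | comp P Q =>
      if [] ∈ P.matches' then odot (pd a P) Q ∪ pd a Q else odot (pd a P) Q
  | RegularExpression.star P => odot (pd a P) (RegularExpression.star P)

/-- Partial derivative of a finite set of regular expressions w.r.t. a letter. -/
noncomputable def pdSet (a : σ) (S : Finset (RegularExpression σ)) :
    Finset (RegularExpression σ) :=
  S.biUnion (pd a)

/-- Partial derivatives w.r.t. a word: `∂_ε(α) = {α}`, `∂_{wσ}(α) = ∂_σ(∂_w(α))`. -/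
noncomputable def pdWord (α : RegularExpression σ) (w : List σ) :
    Finset (RegularExpression σ) :=
  w.foldl (fun S a => pdSet a S) {α}

/-- The set of all partial derivatives of `α`. -/
def PD (α : RegularExpression σ) : Set (RegularExpression σ) :=
  {β | ∃ w : List σ, β ∈ pdWord α w}

/-- Alphabetic size: number of letter occurrences. -/
def alph : RegularExpression σ → ℕ
  | zero => 0
  | epsilon => 0
  | char _ => 1
  | plus P Q => alph P + alph Q
  | comp P Q => alph P + alph Q
  | RegularExpression.star P => alph P

/-- The language of a finite set of regular expressions. -/
def langOf (S : Finset (RegularExpression σ)) : Language σ :=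
  {w | ∃ β ∈ S, w ∈ β.matches'}

open scoped Computability

lemma langOf_union (S T : Finset (RegularExpression σ)) :
    langOf (S ∪ T) = langOf S + langOf T := by
  ext w
  simp only [langOf, Finset.mem_union, Language.mem_add, Set.mem_setOf_eq]
  constructor
  · rintro ⟨β, hβ | hβ, hw⟩
    exacts [Or.inl ⟨β, hβ, hw⟩, Or.inr ⟨β, hβ, hw⟩]
  · rintro (⟨β, hβ, hw⟩ | ⟨β, hβ, hw⟩)
    exacts [⟨β, Or.inl hβ, hw⟩, ⟨β, Or.inr hβ, hw⟩]

lemma langOf_odot (S : Finset (RegularExpression σ)) (β : RegularExpression σ) :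
    langOf (odot S β) = langOf S * β.matches' := by
  by_cases hβ : β = zero
  · subst hβ
    ext w
    simp only [odot, if_pos rfl, langOf, Finset.notMem_empty, false_and, exists_false,
      Set.mem_setOf_eq, exists_prop]
    refine Iff.trans ?_ Language.mem_mul.symm
    constructor
    · rintro ⟨β, hβ, -⟩
      simp at hβ
    · rintro ⟨u, hu, v, hv, rfl⟩
      exact (Language.notMem_zero v hv).elim
  · ext w
    simp only [odot, if_neg hβ, langOf, Set.mem_setOf_eq, Finset.mem_image]
    refine Iff.trans ?_ Language.mem_mul.symm
    constructor
    · rintro ⟨γ, ⟨δ, hδ, rfl⟩, hw⟩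
      have hw' : w ∈ δ.matches' * β.matches' := hw
      rw [Language.mem_mul] at hw'
      obtain ⟨u, hu, v, hv, rfl⟩ := hw'
      exact ⟨u, ⟨δ, hδ, hu⟩, v, hv, rfl⟩
    · rintro ⟨u, ⟨δ, hδ, hu⟩, v, hv, rfl⟩
      exact ⟨comp δ β, ⟨δ, hδ, rfl⟩,
        show u ++ v ∈ δ.matches' * β.matches' from Language.append_mem_mul hu hv⟩

lemma cons_mem_kstar_iff {L : Language σ} {a : σ} {w : List σ} :
    a :: w ∈ L∗ ↔ ∃ u v, a :: u ∈ L ∧ v ∈ L∗ ∧ u ++ v = w := by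
  constructor
  · intro h
    rw [Language.mem_kstar_iff_exists_nonempty] at h
    obtain ⟨S, hS, hmem⟩ := h
    induction S with
    | nil => simp at hS
    | cons s S ih =>
      rcases s with _ | ⟨b, s⟩
      · exact absurd rfl (hmem [] (by simp)).2
      · simp only [List.flatten, List.cons_append, List.cons.injEq] at hS
        obtain ⟨rfl, rfl⟩ := hS
        refine ⟨s, S.flatten, (hmem _ (by simp)).1, ?_, rfl⟩
        exact Language.join_mem_kstar fun y hy => (hmem y (by simp [hy])).1
  · rintro ⟨u, v, hu, hv, rfl⟩
    rw [Language.mem_kstar] at hv ⊢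
    obtain ⟨M, rfl, hM⟩ := hv
    refine ⟨(a :: u) :: M, by simp, ?_⟩
    intro y hy
    rcases List.mem_cons.1 hy with rfl | hy
    exacts [hu, hM y hy]

/-- `L(∂_σ(α)) = σ⁻¹ L(α)`. -/
theorem langOf_pd (α : RegularExpression σ) (a : σ) :
    langOf (pd a α) = {w | a :: w ∈ α.matches'} := by
  induction α with
  | zero =>
    ext w
    constructor
    · rintro ⟨β, hβ, -⟩
      exact absurd hβ (Finset.notMem_empty β)
    · intro h
      exact (Language.notMem_zero (a :: w) h).elim
  | epsilon =>
    ext w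
    constructor
    · rintro ⟨β, hβ, -⟩
      exact absurd hβ (Finset.notMem_empty β)
    · intro h
      have : a :: w ∈ (1 : Language σ) := h
      simp [Language.mem_one] at this
  | char b =>
    ext w
    by_cases hb : b = a
    · subst hb
      have hpd : pd b (char b) = {epsilon} := by simp [pd]
      rw [hpd]
      constructor
      · rintro ⟨β, hβ, hw⟩
        rw [Finset.mem_singleton] at hβ
        subst hβ
        have : w = [] := by
          simpa [Language.mem_one] using (hw : w ∈ (1 : Language σ))
        subst this
        show [b] ∈ ({[b]} : Language σ)
        rfl
      · intro h
        have h' : b :: w = [b] := h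
        have hw : w = [] := by simpa using h'
        refine ⟨epsilon, Finset.mem_singleton_self _, ?_⟩
        show w ∈ (1 : Language σ)
        simp [Language.mem_one, hw]
    · have hpd : pd a (char b) = ∅ := by simp [pd, hb]
      rw [hpd]
      constructor
      · rintro ⟨β, hβ, -⟩
        exact absurd hβ (Finset.notMem_empty β)
      · intro h
        have h' : a :: w = [b] := h
        simp at h'
        exact (hb h'.1.symm).elim
  | plus P Q ihP ihQ =>
    ext w
    have hpd : pd a (plus P Q) = pd a P ∪ pd a Q := rfl
    rw [hpd, langOf_union]
    rw [Language.mem_add, ihP, ihQ]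
    constructor
    · rintro (h | h)
      · exact Or.inl h
      · exact Or.inr h
    · intro h
      have h' : a :: w ∈ P.matches' + Q.matches' := h
      rw [Language.mem_add] at h'
      exact h'
  | comp P Q ihP ihQ =>
    ext w
    by_cases hP : [] ∈ P.matches'
    · have hpd : pd a (comp P Q) = odot (pd a P) Q ∪ pd a Q := by simp [pd, hP]
      rw [hpd, langOf_union, Language.mem_add, langOf_odot, ihP, ihQ]
      constructor
      · rintro (h | h)
        · replace h := Language.mem_mul.1 h
          obtain ⟨u, hu, v, hv, rfl⟩ := h
          exact show (a :: u) ++ v ∈ P.matches' * Q.matches' from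
            Language.append_mem_mul hu hv
        · exact show [] ++ (a :: w) ∈ P.matches' * Q.matches' from
            Language.append_mem_mul hP h
      · intro h
        have h' : a :: w ∈ P.matches' * Q.matches' := h
        rw [Language.mem_mul] at h'
        obtain ⟨u, hu, v, hv, huv⟩ := h'
        rcases u with _ | ⟨c, u⟩
        · right
          simp only [List.nil_append] at huv
          subst huv
          exact hv
        · left
          simp only [List.cons_append, List.cons.injEq] at huv
          obtain ⟨rfl, rfl⟩ := huv
          refine Language.mem_mul.2 ?_
          exact ⟨u, hu, v, hv, rfl⟩
    · have hpd : pd a (comp P Q) = odot (pd a P) Q := by simp [pd, hP]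
      rw [hpd, langOf_odot, ihP]
      constructor
      · intro h
        replace h := Language.mem_mul.1 h
        obtain ⟨u, hu, v, hv, rfl⟩ := h
        exact show (a :: u) ++ v ∈ P.matches' * Q.matches' from
          Language.append_mem_mul hu hv
      · intro h
        have h' : a :: w ∈ P.matches' * Q.matches' := h
        rw [Language.mem_mul] at h'
        obtain ⟨u, hu, v, hv, huv⟩ := h'
        rcases u with _ | ⟨c, u⟩
        · exact absurd hu hP
        · simp only [List.cons_append, List.cons.injEq] at huv
          obtain ⟨rfl, rfl⟩ := huv
          refine Language.mem_mul.2 ?_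
          exact ⟨u, hu, v, hv, rfl⟩
  | star P ihP =>
    ext w
    have hpd : pd a (RegularExpression.star P) = odot (pd a P) (RegularExpression.star P) :=
      rfl
    rw [hpd, langOf_odot, ihP]
    constructor
    · intro h
      replace h := Language.mem_mul.1 h
      obtain ⟨u, hu, v, hv, rfl⟩ := h
      exact show a :: (u ++ v) ∈ P.matches'∗ from
        cons_mem_kstar_iff.2 ⟨u, v, hu, hv, rfl⟩
    · intro h
      have h' : a :: w ∈ P.matches'∗ := h
      obtain ⟨u, v, hu, hv, rfl⟩ := cons_mem_kstar_iff.1 h'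
      refine Language.mem_mul.2 ?_
      exact ⟨u, hu, v, hv, rfl⟩
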